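/- Let (x,y) ∈ ℝ² with (x,y) ≠ (0,0). Then there exist a > 0, λ ∈ {0,1,2}, and a matrix g ∈ O(1,1) (i.e., a 2×2 real matrix with gᵀ·diag(1,-1)·g = diag(1,-1)) such that the row vector (x,y)·g = (a, λa). -/

import Mathlib

open Matrix

private lemma boost_mem (p q : ℝ) (hpq : p^2 - q^2 = 1) :
    (!![p,q;q,p])ᵀ * Matrix.diagonal ![(1:ℝ),-1] * !![p,q;q,p] = Matrix.diagonal ![1,-1] := by
  have ht : (!![p,q;q,p])ᵀ = !![p,q;q,p] := by
    ext i j; fin_cases i <;> fin_cases j <;> rfl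
  have hD : Matrix.diagonal ![(1:ℝ),-1] = !![1,0;0,-1] := by
    ext i j; fin_cases i <;> fin_cases j <;> simp [Matrix.diagonal]
  rw [ht, hD, Matrix.mul_fin_two, Matrix.mul_fin_two]
  ext i j; fin_cases i <;> fin_cases j <;> simp <;> nlinarith [hpq]

private lemma diag_mem (p r : ℝ) (hp : p^2 = 1) (hr : r^2 = 1) :
    (!![p,0;0,r])ᵀ * Matrix.diagonal ![(1:ℝ),-1] * !![p,0;0,r] = Matrix.diagonal ![1,-1] := by
  have ht : (!![p,0;0,r])ᵀ = !![p,0;0,r] := by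
    ext i j; fin_cases i <;> fin_cases j <;> rfl
  have hD : Matrix.diagonal ![(1:ℝ),-1] = !![1,0;0,-1] := by
    ext i j; fin_cases i <;> fin_cases j <;> simp [Matrix.diagonal]
  rw [ht, hD, Matrix.mul_fin_two, Matrix.mul_fin_two]
  ext i j; fin_cases i <;> fin_cases j <;> simp <;> nlinarith [hp, hr]

private lemma vecMul_two (a b c d u v : ℝ) :
    Matrix.vecMul ![u,v] !![a,b;c,d] = ![u*a+v*c, u*b+v*d] := by
  funext i
  fin_cases i <;> simp [Matrix.vecMul, dotProduct, Fin.sum_univ_two]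

theorem stmt_0 (x y : ℝ) (h : (x, y) ≠ ((0 : ℝ), (0 : ℝ))) :
    ∃ (a lam : ℝ) (g : Matrix (Fin 2) (Fin 2) ℝ),
      0 < a ∧ lam ∈ ({0, 1, 2} : Set ℝ) ∧
      gᵀ * Matrix.diagonal ![1, -1] * g = Matrix.diagonal ![1, -1] ∧
      Matrix.vecMul ![x, y] g = ![a, lam * a] := by
  rcases lt_trichotomy (y^2) (x^2) with h1 | h1 | h1
  · -- x² > y² : λ = 0
    set a := Real.sqrt (x^2 - y^2) with ha_def
    have ha2 : a^2 = x^2 - y^2 := Real.sq_sqrt (by linarith)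
    have ha : 0 < a := Real.sqrt_pos.mpr (by linarith)
    refine ⟨a, 0, !![x/a, -y/a; -y/a, x/a], ha, by simp, ?_, ?_⟩
    · exact boost_mem _ _ (by field_simp; nlinarith [ha2])
    · rw [vecMul_two]
      have h1 : x*(x/a) + y*(-y/a) = a := by field_simp; nlinarith [ha2]
      have h2 : x*(-y/a) + y*(x/a) = 0*a := by field_simp; ring
      rw [h1, h2]
  · -- x² = y² : λ = 1
    have hx : x ≠ 0 := by
      intro hx0
      have hy0 : y = 0 := by nlinarith [h1]
      exact h (by simp [hx0, hy0])
    have hy : y ≠ 0 := by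
      intro hy0; apply hx; nlinarith [h1]
    refine ⟨|x|, 1, !![|x|/x, 0; 0, |x|/y], abs_pos.mpr hx, by simp, ?_, ?_⟩
    · refine diag_mem _ _ ?_ ?_
      · rw [div_pow, sq_abs]; field_simp
      · rw [div_pow, sq_abs, h1]; field_simp
    · rw [vecMul_two]
      have e1 : x*(|x|/x) + y*0 = |x| := by field_simp; ring
      have e2 : x*0 + y*(|x|/y) = 1*|x| := by field_simp; ring
      rw [e1, e2]
  · -- x² < y² : λ = 2
    set b := Real.sqrt (y^2 - x^2) with hb_def
    have hb2 : b^2 = y^2 - x^2 := Real.sq_sqrt (by linarith)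
    have hb : 0 < b := Real.sqrt_pos.mpr (by linarith)
    set s := Real.sqrt 3 with hs_def
    have hs2 : s^2 = 3 := Real.sq_sqrt (by norm_num)
    have hs : 0 < s := Real.sqrt_pos.mpr (by norm_num)
    refine ⟨b/s, 2, !![(2*y-x)/(b*s), (y-2*x)/(b*s); (y-2*x)/(b*s), (2*y-x)/(b*s)],
      div_pos hb hs, by simp, ?_, ?_⟩
    · refine boost_mem _ _ ?_
      have hbs : b*s ≠ 0 := by positivity
      field_simp
      nlinarith [hb2, hs2]
    · rw [vecMul_two]
      have hbs : b*s ≠ 0 := by positivity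
      have e1 : x*((2*y-x)/(b*s)) + y*((y-2*x)/(b*s)) = b/s := by
        field_simp
        nlinarith [hb2, hs2, hs, hb]
      have e2 : x*((y-2*x)/(b*s)) + y*((2*y-x)/(b*s)) = 2*(b/s) := by
        field_simp
        nlinarith [hb2, hs2, hs, hb]
      rw [e1, e2]
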